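/- Let X ⊂ ℝⁿ be a finite set, let r > 0, and for x ∈ X let N(x) denote its one-hop neighborhood in the r-neighborhood graph G_r(X). Let 0 < ε < 1 satisfy, for every x ∈ X, ε < min{ (r² − max_{y∈N(x)} ‖x−y‖²) / max_{y∈N(x)} ‖x−y‖², (min_{y∉N(x)} ‖x−y‖² − r²) / min_{y∉N(x)} ‖x−y‖² }. Let A ∈ ℝ^{m×n} be any (deterministic) matrix satisfying (1−ε)‖x−y‖² ≤ ‖Ax − Ay‖² ≤ (1+ε)‖x−y‖² for all x, y ∈ X. Then the map ψ: x ↦ Ax is a graph isomorphism between G_r(X) and G_r(AX), where AX = {Ax : x ∈ X}. -/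
import Mathlib


open MeasureTheory ProbabilityTheory

/-- The Euclidean (`L²`) norm of a vector in `ℝ^k`. -/
noncomputable def euclNorm {k : ℕ} (x : Fin k → ℝ) : ℝ := Real.sqrt (∑ i, x i ^ 2)

/-- The Euclidean distance between two vectors in `ℝ^k`. -/
noncomputable def distE {k : ℕ} (a b : Fin k → ℝ) : ℝ := euclNorm (a - b)

/-- Matrix-vector multiplication, viewing a matrix as a function of its rows. -/
def matVec {m n : ℕ} (A : Fin m → Fin n → ℝ) (x : Fin n → ℝ) : Fin m → ℝ :=
  fun i => ∑ j, A i j * x j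

/-- The law of a random `m × n` matrix with i.i.d. centered Gaussian entries of variance `v`. -/
noncomputable def gaussMat (m n : ℕ) (v : NNReal) : Measure (Fin m → Fin n → ℝ) :=
  Measure.pi fun _ : Fin m => Measure.pi fun _ : Fin n => gaussianReal 0 v

/-- Adjacency in the `r`-neighborhood graph `G_r(X)` (w.r.t. the distance `d`):
distinct points of `X` at distance `< r`. -/
def RAdj {V : Type*} (d : V → V → ℝ) (X : Finset V) (r : ℝ) (x y : V) : Prop :=
  x ≠ y ∧ x ∈ X ∧ y ∈ X ∧ d x y < r

/-- `max_{y ∈ N(x)} g x y`, where `N(x)` is the one-hop neighborhood of `x` in `G_r(X)`. -/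
noncomputable def maxNbrVal {V : Type*} (d : V → V → ℝ) (X : Finset V) (r : ℝ)
    (g : V → V → ℝ) (x : V) : ℝ :=
  sSup {s : ℝ | ∃ y, RAdj d X r x y ∧ s = g x y}

/-- `min_{y ∈ X, y ∉ N(x), y ≠ x} g x y`, where `N(x)` is the one-hop neighborhood of `x`
in `G_r(X)`. -/
noncomputable def minNonNbrVal {V : Type*} (d : V → V → ℝ) (X : Finset V) (r : ℝ)
    (g : V → V → ℝ) (x : V) : ℝ :=
  sInf {s : ℝ | ∃ y ∈ X, y ≠ x ∧ ¬ RAdj d X r x y ∧ s = g x y}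

/-- `ψ` is a graph isomorphism between `G_r(X)` and `G_r(ψ(X))`: it is a bijection of `X`
onto its image preserving and reflecting `r`-neighborhood adjacency. -/
def IsRIso {V W : Type*} [DecidableEq W] (dV : V → V → ℝ) (dW : W → W → ℝ)
    (X : Finset V) (r : ℝ) (ψ : V → W) : Prop :=
  Set.InjOn ψ X ∧
    ∀ x ∈ X, ∀ y ∈ X, (RAdj dV X r x y ↔ RAdj dW (X.image ψ) r (ψ x) (ψ y))


lemma distE_nonneg {k : ℕ} (a b : Fin k → ℝ) : 0 ≤ distE a b := Real.sqrt_nonneg _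

lemma distE_self {k : ℕ} (a : Fin k → ℝ) : distE a a = 0 := by
  simp [distE, euclNorm]

lemma distE_pos {k : ℕ} {a b : Fin k → ℝ} (h : a ≠ b) : 0 < distE a b := by
  obtain ⟨i, hi⟩ := Function.ne_iff.mp h
  apply Real.sqrt_pos.mpr
  have h1 : a i - b i ≠ 0 := sub_ne_zero.mpr hi
  have h2 : 0 < ((a - b) i) ^ 2 := by
    have := pow_ne_zero 2 h1
    simpa [Pi.sub_apply] using lt_of_le_of_ne (sq_nonneg (a i - b i)) (Ne.symm this)
  calc (0:ℝ) < ((a - b) i) ^ 2 := h2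
    _ ≤ ∑ j, ((a - b) j) ^ 2 :=
      Finset.single_le_sum (f := fun j => ((a - b) j) ^ 2) (fun j _ => sq_nonneg _) (Finset.mem_univ i)

/-- a deterministic linear map with squared-distance distortion bounds induces a
graph isomorphism of `r`-neighborhood graphs. -/
theorem stmt_5 (n m : ℕ) (X : Finset (Fin n → ℝ)) (r : ℝ) (hr : 0 < r)
    (ε : ℝ) (hε0 : 0 < ε) (hε1 : ε < 1)
    (hgap : ∀ x ∈ X,
      ε < min
        ((r ^ 2 - maxNbrVal distE X r (fun a b => distE a b ^ 2) x) /
          maxNbrVal distE X r (fun a b => distE a b ^ 2) x)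
        ((minNonNbrVal distE X r (fun a b => distE a b ^ 2) x - r ^ 2) /
          minNonNbrVal distE X r (fun a b => distE a b ^ 2) x))
    (A : Fin m → Fin n → ℝ)
    (hA : ∀ x ∈ X, ∀ y ∈ X,
      (1 - ε) * distE x y ^ 2 ≤ distE (matVec A x) (matVec A y) ^ 2 ∧
        distE (matVec A x) (matVec A y) ^ 2 ≤ (1 + ε) * distE x y ^ 2) :
    IsRIso distE distE X r (matVec A) := by
  have injOn : Set.InjOn (matVec A) X := by
    intro x hx y hy hxy
    by_contra hne
    have hdpos : 0 < distE x y := distE_pos hne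
    have hA1 := (hA x hx y hy).1
    have hz : distE (matVec A x) (matVec A y) = 0 := by rw [hxy]; exact distE_self _
    rw [hz] at hA1
    norm_num at hA1
    nlinarith [mul_pos (by linarith : (0:ℝ) < 1 - ε) (pow_pos hdpos 2)]
  refine ⟨injOn, fun x hx y hy => ?_⟩
  constructor
  · rintro ⟨hne, -, -, hd⟩
    refine ⟨fun h => hne (injOn hx hy h), Finset.mem_image_of_mem _ hx,
      Finset.mem_image_of_mem _ hy, ?_⟩
    set M := maxNbrVal distE X r (fun a b => distE a b ^ 2) x with hM
    have hbdd : BddAbove {s : ℝ | ∃ y, RAdj distE X r x y ∧ s = distE x y ^ 2} := by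
      refine ⟨r ^ 2, ?_⟩
      rintro s ⟨z, ⟨-, -, -, hz⟩, rfl⟩
      have := distE_nonneg x z
      nlinarith
    have hM1 : distE x y ^ 2 ≤ M := le_csSup hbdd ⟨y, ⟨hne, hx, hy, hd⟩, rfl⟩
    have hMpos : 0 < M := lt_of_lt_of_le (pow_pos (distE_pos hne) 2) hM1
    have hgx := lt_of_lt_of_le (hgap x hx) (min_le_left _ _)
    rw [← hM, div_eq_mul_inv] at hgx
    have hεM : ε * M < r ^ 2 - M := by
      have := (lt_div_iff₀ hMpos).mp (by simpa [div_eq_mul_inv] using hgx)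
      linarith
    have hA2 := (hA x hx y hy).2
    have hdA0 := distE_nonneg (matVec A x) (matVec A y)
    have hsq : distE (matVec A x) (matVec A y) ^ 2 < r ^ 2 := by nlinarith
    nlinarith
  · rintro ⟨hne', -, -, hdA⟩
    have hne : x ≠ y := fun h => hne' (by rw [h])
    refine ⟨hne, hx, hy, ?_⟩
    by_contra hge
    push_neg at hge
    have hnadj : ¬ RAdj distE X r x y := fun ⟨_, _, _, h⟩ => absurd h (not_lt.mpr hge)
    set μ := minNonNbrVal distE X r (fun a b => distE a b ^ 2) x with hμdef
    have hbdd : BddBelow {s : ℝ | ∃ y ∈ X, y ≠ x ∧ ¬ RAdj distE X r x y ∧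
        s = distE x y ^ 2} := by
      refine ⟨r ^ 2, ?_⟩
      rintro s ⟨z, hz, hzx, hnz, rfl⟩
      have hrz : r ≤ distE x z := by
        by_contra hlt
        exact hnz ⟨Ne.symm hzx, hx, hz, not_le.mp hlt⟩
      have := distE_nonneg x z
      nlinarith
    have hmem : distE x y ^ 2 ∈ {s : ℝ | ∃ y ∈ X, y ≠ x ∧ ¬ RAdj distE X r x y ∧
        s = distE x y ^ 2} := ⟨y, hy, hne.symm, hnadj, rfl⟩
    have hμ1 : μ ≤ distE x y ^ 2 := csInf_le hbdd hmem
    have hμ2 : r ^ 2 ≤ μ := le_csInf ⟨_, hmem⟩ (by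
      rintro s ⟨z, hz, hzx, hnz, rfl⟩
      have hrz : r ≤ distE x z := by
        by_contra hlt
        exact hnz ⟨Ne.symm hzx, hx, hz, not_le.mp hlt⟩
      have := distE_nonneg x z
      show r ^ 2 ≤ distE x z ^ 2
      nlinarith)
    have hμpos : 0 < μ := lt_of_lt_of_le (by positivity) hμ2
    have hgx := lt_of_lt_of_le (hgap x hx) (min_le_right _ _)
    rw [← hμdef] at hgx
    have hεμ : ε * μ < μ - r ^ 2 := by
      have := (lt_div_iff₀ hμpos).mp hgx
      linarith
    have hA1 := (hA x hx y hy).1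
    have hdA0 := distE_nonneg (matVec A x) (matVec A y)
    nlinarith
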